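/- Let N_1 and N_2 be Bruck-replaceable nests of reguli in a regular spread S of PG(3,q) such that N_1 and N_2 share no lines except those on exactly one common regulus R. Then N = (N_1 ∪ N_2) \ {R} is a nest (every covered line lies on exactly two of its reguli). -/
import Mathlib


open Finset

/-- A nest of reguli: every line covered by some regulus of `N` lies in exactly two
reguli of `N`.  Lines are finite sets of points, reguli are finite sets of lines. -/
def IsNest {P : Type*} [DecidableEq P] (N : Finset (Finset (Finset P))) : Prop :=
  ∀ ℓ : Finset P, (∃ Rg ∈ N, ℓ ∈ Rg) → (N.filter (fun Rg => ℓ ∈ Rg)).card = 2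

/-- The orbit of a line `ℓ` under the permutation `ψ` of the points, truncated at length `n`. -/
def lineOrbit {P : Type*} [DecidableEq P] (ψ : Equiv.Perm P) (n : ℕ) (ℓ : Finset P) :
    Finset (Finset P) :=
  (Finset.range n).image fun k => ℓ.image ⇑(ψ ^ k)

/-- `H` is a Bruck hemi-replacement of the nest `N`: for each regulus `Rg` of `N` it selects
half of the opposite regulus `opp Rg`, which is an orbit under `ψ` (the square of a Bruck
kernel generator), and all selected lines are pairwise disjoint. -/
def IsBruckHemiReplacement {P : Type*} [DecidableEq P] (q : ℕ) (ψ : Equiv.Perm P)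
    (opp : Finset (Finset P) → Finset (Finset P))
    (N : Finset (Finset (Finset P))) (H : Finset (Finset P) → Finset (Finset P)) : Prop :=
  (∀ Rg ∈ N, H Rg ⊆ opp Rg ∧ (H Rg).card = (q + 1) / 2 ∧
      ∃ ℓ ∈ opp Rg, H Rg = lineOrbit ψ ((q + 1) / 2) ℓ) ∧
  (∀ Rg ∈ N, ∀ Rg' ∈ N, ∀ x ∈ H Rg, ∀ y ∈ H Rg', x ≠ y → Disjoint x y)

/-- A nest is Bruck-replaceable if it admits a Bruck hemi-replacement. -/
def BruckReplaceable {P : Type*} [DecidableEq P] (q : ℕ) (ψ : Equiv.Perm P)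
    (opp : Finset (Finset P) → Finset (Finset P))
    (N : Finset (Finset (Finset P))) : Prop :=
  ∃ H, IsBruckHemiReplacement q ψ opp N H

/-- If `N₁`, `N₂` are Bruck-replaceable nests in a regular spread of `PG(3,q)`
sharing no lines except those on exactly one common regulus `R`, then
`N = (N₁ ∪ N₂) \ {R}` is a nest. -/
theorem stmt_1 {P : Type*} [DecidableEq P] (q : ℕ) (hq : Odd q)
    (ψ : Equiv.Perm P) (opp : Finset (Finset P) → Finset (Finset P))
    (N₁ N₂ : Finset (Finset (Finset P)))
    (hN₁ : IsNest N₁) (hN₂ : IsNest N₂)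
    (hBr₁ : BruckReplaceable q ψ opp N₁) (hBr₂ : BruckReplaceable q ψ opp N₂)
    (R : Finset (Finset P))
    -- `R` is the unique common regulus of `N₁` and `N₂`
    (hmeet : N₁ ∩ N₂ = {R})
    -- the nests share no lines except those on `R`
    (hshare : ∀ ℓ : Finset P, (∃ A ∈ N₁, ℓ ∈ A) → (∃ B ∈ N₂, ℓ ∈ B) → ℓ ∈ R) :
    IsNest ((N₁ ∪ N₂).erase R) := by
  classical
  have hR : R ∈ N₁ ∩ N₂ := by rw [hmeet]; exact Finset.mem_singleton_self R
  have hR₁ : R ∈ N₁ := (Finset.mem_inter.mp hR).1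
  have hR₂ : R ∈ N₂ := (Finset.mem_inter.mp hR).2
  intro ℓ hℓ
  have key : ((N₁ ∪ N₂).erase R).filter (fun Rg => ℓ ∈ Rg)
      = ((N₁.filter (fun Rg => ℓ ∈ Rg)) ∪ (N₂.filter (fun Rg => ℓ ∈ Rg))).erase R := by
    rw [Finset.filter_erase, Finset.filter_union]
  by_cases hℓR : ℓ ∈ R
  · have c1 : (N₁.filter (fun Rg => ℓ ∈ Rg)).card = 2 := hN₁ ℓ ⟨R, hR₁, hℓR⟩
    have c2 : (N₂.filter (fun Rg => ℓ ∈ Rg)).card = 2 := hN₂ ℓ ⟨R, hR₂, hℓR⟩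
    have hint : (N₁.filter (fun Rg => ℓ ∈ Rg)) ∩ (N₂.filter (fun Rg => ℓ ∈ Rg)) = {R} := by
      rw [← Finset.filter_inter_distrib, hmeet, Finset.filter_singleton, if_pos hℓR]
    have hcu : ((N₁.filter (fun Rg => ℓ ∈ Rg)) ∪ (N₂.filter (fun Rg => ℓ ∈ Rg))).card = 3 := by
      have := Finset.card_union_add_card_inter (N₁.filter (fun Rg => ℓ ∈ Rg))
        (N₂.filter (fun Rg => ℓ ∈ Rg))
      rw [c1, c2, hint, Finset.card_singleton] at this
      omega
    have hRmem : R ∈ (N₁.filter (fun Rg => ℓ ∈ Rg)) ∪ (N₂.filter (fun Rg => ℓ ∈ Rg)) :=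
      Finset.mem_union_left _ (Finset.mem_filter.mpr ⟨hR₁, hℓR⟩)
    rw [key, Finset.card_erase_of_mem hRmem, hcu]
  · obtain ⟨Rg, hRg, hℓRg⟩ := hℓ
    have hRgU := Finset.mem_of_mem_erase hRg
    rcases Finset.mem_union.mp hRgU with h1 | h2
    · have c1 : (N₁.filter (fun Rg => ℓ ∈ Rg)).card = 2 := hN₁ ℓ ⟨Rg, h1, hℓRg⟩
      have c2 : N₂.filter (fun Rg => ℓ ∈ Rg) = ∅ := by
        rw [Finset.filter_eq_empty_iff]
        intro B hB hℓB
        exact hℓR (hshare ℓ ⟨Rg, h1, hℓRg⟩ ⟨B, hB, hℓB⟩)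
      have hRnot : R ∉ (N₁.filter (fun Rg => ℓ ∈ Rg)) ∪ (N₂.filter (fun Rg => ℓ ∈ Rg)) := by
        simp only [Finset.mem_union, Finset.mem_filter]
        rintro (⟨_, h⟩ | ⟨_, h⟩) <;> exact hℓR h
      rw [key, Finset.erase_eq_of_notMem hRnot, c2, Finset.union_empty, c1]
    · have c2 : (N₂.filter (fun Rg => ℓ ∈ Rg)).card = 2 := hN₂ ℓ ⟨Rg, h2, hℓRg⟩
      have c1 : N₁.filter (fun Rg => ℓ ∈ Rg) = ∅ := by
        rw [Finset.filter_eq_empty_iff]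
        intro B hB hℓB
        exact hℓR (hshare ℓ ⟨B, hB, hℓB⟩ ⟨Rg, h2, hℓRg⟩)
      have hRnot : R ∉ (N₁.filter (fun Rg => ℓ ∈ Rg)) ∪ (N₂.filter (fun Rg => ℓ ∈ Rg)) := by
        simp only [Finset.mem_union, Finset.mem_filter]
        rintro (⟨_, h⟩ | ⟨_, h⟩) <;> exact hℓR h
      rw [key, Finset.erase_eq_of_notMem hRnot, c1, Finset.empty_union, c2]
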